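/- Let 0 < a < b, c > 1, and 0 < α < α_c := sqrt((c^2-1)/(b c^2 - a)). Define Q̂₊(ξ) = iξc + iξŜ(ξ) with Ŝ(ξ) = sqrt((1+aξ^2)/(1+bξ^2)). Then for all real k, with ξ = k + iα, we have -2αc < Re Q̂₊(ξ) < -αc. -/

import Mathlib

open Complex

lemma root_contra (X P T A G : ℝ) (hX : 0 < X) (hP : 0 < P) (hA : 0 < A) (hG : 0 < G)
    (hT : 0 < T)
    (hroot : X*(X-P) = (T+A)*A*G^2) (hPT : G*T < P)
    (hge : (T+A)*P ≤ T*X) : False := by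
  have h1 : (T+A)*P*X ≤ T*(X*X) := by nlinarith [mul_le_mul_of_nonneg_right hge hX.le]
  have h2 : A*(P*X) ≤ A*(T*(T+A)*G^2) := by nlinarith [h1]
  have h3 : P*X ≤ T*(T+A)*G^2 := le_of_mul_le_mul_left h2 hA
  have h4 : (T+A)*(P*P) ≤ T*(P*X) := by nlinarith [mul_le_mul_of_nonneg_right hge hP.le]
  have h5 : (T+A)*(P*P) ≤ (T+A)*(T*T*G^2) := by nlinarith [mul_le_mul_of_nonneg_left h3 hT.le]
  have h6 : P*P ≤ T*T*G^2 := le_of_mul_le_mul_left h5 (by linarith)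
  nlinarith [mul_pos hG hT]

set_option maxHeartbeats 1000000 in
lemma aux_bounds (a b c α k x y E : ℝ) (ha : 0 < a) (hab : a < b) (hc : 1 < c) (hα : 0 < α)
    (hkey : α^2*(b*c^2-a) < c^2-1) (hαb : b*α^2 < 1) (haα : a*α^2 < 1)
    (hx : 0 ≤ x)
    (hEdef : E = (1+b*(k^2-α^2))^2 + (2*b*k*α)^2)
    (hP : (x^2-y^2)*E = 1+(a+b)*(k^2-α^2)+a*b*(k^2+α^2)^2)
    (hQ : (2*x*y)*E = 2*k*α*(a-b)) :
    0 < α*x + k*y ∧ α*x + k*y < α*c := by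
  have hb : 0 < b := ha.trans hab
  have hc0 : (0:ℝ) < c := by linarith
  have hE0 : 0 < E := by
    have h1 : 0 < (1-b*α^2)^2 := pow_pos (by linarith) 2
    nlinarith [sq_nonneg k, sq_nonneg (k^2), sq_nonneg (k*α), mul_pos hb hb]
  have hPpos : 0 < 1+(a+b)*(k^2-α^2)+a*b*(k^2+α^2)^2 := by
    nlinarith [mul_pos (show (0:ℝ) < 1-a*α^2 by linarith) (show (0:ℝ) < 1-b*α^2 by linarith),
      mul_pos ha hb, sq_nonneg k, sq_nonneg (k^2), sq_nonneg (k*α)]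
  have hyE : y^2*E = x^2*E - (1+(a+b)*(k^2-α^2)+a*b*(k^2+α^2)^2) := by linear_combination -hP
  have hX2 : 0 < x^2*E := by nlinarith [mul_nonneg (sq_nonneg y) hE0.le]
  have hX0 : 0 < x := by
    rcases hx.lt_or_eq with h | h
    · exact h
    · exfalso; rw [← h] at hX2; simp at hX2
  have hky : k*y ≤ 0 := by
    by_contra h
    push_neg at h
    have hQk : (2*x*(k*y))*E = 2*k^2*α*(a-b) := by linear_combination k*hQ
    nlinarith [mul_pos (mul_pos hX0 h) hE0,
      mul_nonneg (mul_nonneg (sq_nonneg k) hα.le) (sub_nonneg.mpr hab.le)]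
  constructor
  · by_contra hcon
    push_neg at hcon
    have hsq : α^2*x^2 ≤ k^2*y^2 := by
      nlinarith [mul_pos hα hX0, mul_pos (mul_pos hα hα) (mul_pos hX0 hX0)]
    have hyEk : k^2*(y^2*E) = k^2*(x^2*E) - k^2*(1+(a+b)*(k^2-α^2)+a*b*(k^2+α^2)^2) := by
      linear_combination (-(k^2))*hP
    have hgeq : k^2*(1+(a+b)*(k^2-α^2)+a*b*(k^2+α^2)^2) ≤ (k^2-α^2)*(x^2*E) := by
      linarith [mul_le_mul_of_nonneg_right hsq hE0.le, hyEk]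
    have hk0 : k ≠ 0 := by
      intro h
      rw [h] at hgeq
      nlinarith [mul_pos (mul_pos hα hα) hX2]
    have hk2 : 0 < k^2 := by positivity
    have hT : 0 < k^2 - α^2 := by
      nlinarith [mul_pos hk2 hPpos, hX2]
    have hPT : (b-a)*(k^2-α^2) < 1+(a+b)*(k^2-α^2)+a*b*(k^2+α^2)^2 := by
      nlinarith [mul_pos ha hT, mul_nonneg (mul_pos ha hb).le (sq_nonneg (k^2+α^2))]
    have hr1 : (x^2*E)*(y^2*E) = k^2*α^2*(a-b)^2 := by
      linear_combination ((x*y*E + k*α*(a-b))/2)*hQ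
    have hroot : (x^2*E)*((x^2*E)-(1+(a+b)*(k^2-α^2)+a*b*(k^2+α^2)^2))
        = ((k^2-α^2)+α^2)*α^2*(b-a)^2 := by
      linear_combination hr1 - (x^2*E)*hyE
    exact root_contra (x^2*E) _ (k^2-α^2) (α^2) (b-a) hX2 hPpos (by positivity)
      (by linarith) hT hroot hPT (by linarith [hgeq])
  · have h1 : 1-a*α^2 < c^2*(1-b*α^2) := by nlinarith [hkey]
    have h2 : (1-a*α^2)^2 < c^4*(1-b*α^2)^2 := by nlinarith [h1, haα, hαb]
    have hc4 : 1 < c^4 := by nlinarith [sq_nonneg (c^2-1), sq_nonneg (c-1), hc0]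
    have hba4 : 0 < b*c^4 - a := by nlinarith [mul_lt_mul_of_pos_left hc4 hb]
    have hba4' : 0 < b^2*c^4 - a^2 := by
      nlinarith [mul_lt_mul_of_pos_left hc4 (mul_pos hb hb), mul_pos ha hb]
    have hN : (1+2*a*(k^2-α^2)+a^2*(k^2+α^2)^2) < c^4*E := by
      nlinarith [h2, mul_nonneg (sq_nonneg k) hba4.le,
        mul_nonneg (sq_nonneg (k^2)) hba4'.le,
        mul_nonneg (mul_nonneg (sq_nonneg k) (sq_nonneg α)) hba4'.le]
    have hsumsq : ((x^2+y^2)*E)^2 = (1+2*a*(k^2-α^2)+a^2*(k^2+α^2)^2)*E := by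
      linear_combination ((x^2-y^2)*E + (1+(a+b)*(k^2-α^2)+a*b*(k^2+α^2)^2))*hP
        + ((2*x*y)*E + 2*k*α*(a-b))*hQ
        - (1+2*a*(k^2-α^2)+a^2*(k^2+α^2)^2)*hEdef
    have hE2 : ((x^2+y^2)*E)^2 < (c^2*E)^2 := by
      calc ((x^2+y^2)*E)^2 = (1+2*a*(k^2-α^2)+a^2*(k^2+α^2)^2)*E := hsumsq
        _ < (c^4*E)*E := by nlinarith [mul_lt_mul_of_pos_right hN hE0]
        _ = (c^2*E)^2 := by ring
    have h3 : (x^2+y^2)*E < c^2*E := lt_of_pow_lt_pow_left₀ 2 (by positivity) hE2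
    have hc2 : x^2+y^2 < c^2 := (mul_lt_mul_iff_left₀ hE0).mp h3
    have hx2 : x^2 < c^2 := by linarith [sq_nonneg y]
    have hxc : x < c := lt_of_pow_lt_pow_left₀ 2 hc0.le hx2
    linarith [hky, mul_lt_mul_of_pos_left hxc hα]

open Complex

set_option maxHeartbeats 1000000 in
theorem re_Qplus_bounds (a b c α : ℝ) (ha : 0 < a) (hab : a < b) (hc : 1 < c)
    (hα : 0 < α) (hαc : α < Real.sqrt ((c ^ 2 - 1) / (b * c ^ 2 - a))) (k : ℝ) :
    let ξ : ℂ := (k : ℂ) + (α : ℂ) * Complex.I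
    let S : ℂ := ((1 + (a : ℂ) * ξ ^ 2) / (1 + (b : ℂ) * ξ ^ 2)) ^ ((1 : ℂ) / 2)
    let Qp : ℂ := Complex.I * ξ * (c : ℂ) + Complex.I * ξ * S
    (-2 * α * c < Qp.re) ∧ (Qp.re < -(α * c)) := by
  intro ξ S Qp
  have hξ : ξ = (k : ℂ) + (α : ℂ) * Complex.I := rfl
  have hSdef : S = ((1 + (a : ℂ) * ξ ^ 2) / (1 + (b : ℂ) * ξ ^ 2)) ^ ((1 : ℂ) / 2) := rfl
  have hQdef : Qp = Complex.I * ξ * (c : ℂ) + Complex.I * ξ * S := rfl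
  set x := S.re with hxdef
  set y := S.im with hydef
  have hb : 0 < b := ha.trans hab
  have hc2' : (0:ℝ) < c^2 - 1 := by nlinarith
  have hden : (0:ℝ) < b*c^2 - a := by nlinarith
  have hα2 : α^2 < (c^2-1)/(b*c^2-a) := by
    have h := (Real.lt_sqrt hα.le).mp hαc
    convert h using 2 <;> ring_nf
  have hkey : α^2*(b*c^2-a) < c^2-1 := by
    have := (lt_div_iff₀ hden).mp hα2
    linarith
  have hαb : b*α^2 < 1 := by
    nlinarith [hkey, hc2', mul_lt_mul_of_pos_left hab (mul_pos hα hα)]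
  have haα : a*α^2 < 1 := by nlinarith [mul_pos hα hα]
  have hD : (1 + (b : ℂ) * ξ ^ 2) ≠ 0 := by
    intro h
    rw [hξ, Complex.ext_iff] at h
    simp [pow_two] at h
    obtain ⟨h1, h2⟩ := h
    nlinarith [sq_nonneg k, sq_nonneg α]
  have hS2 : S ^ 2 = (1 + (a : ℂ) * ξ ^ 2) / (1 + (b : ℂ) * ξ ^ 2) := by
    rw [hSdef, show ((1:ℂ)/2) = (((2:ℕ)):ℂ)⁻¹ by norm_num]
    exact Complex.cpow_nat_inv_pow _ two_ne_zero
  have hx0 : 0 ≤ x := by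
    rw [hxdef, hSdef, show ((1:ℂ)/2) = (2⁻¹:ℂ) by norm_num, Complex.cpow_inv_two_re]
    positivity
  have hND : (1 + (a : ℂ) * ξ ^ 2) = S ^ 2 * (1 + (b : ℂ) * ξ ^ 2) :=
    (div_eq_iff hD).mp hS2.symm
  rw [hξ, Complex.ext_iff] at hND
  simp [pow_two, Complex.mul_re, Complex.mul_im] at hND
  obtain ⟨hre, him⟩ := hND
  rw [← hxdef, ← hydef] at hre him
  have hQre : Qp.re = -(α*c) - (α*x + k*y) := by
    rw [hQdef, hξ]
    simp [Complex.mul_re, Complex.mul_im]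
    ring
  have hP : (x^2-y^2)*((1+b*(k^2-α^2))^2 + (2*b*k*α)^2)
      = 1+(a+b)*(k^2-α^2)+a*b*(k^2+α^2)^2 := by
    linear_combination (-(1+b*(k^2-α^2)))*hre - (2*b*k*α)*him
  have hQ : (2*x*y)*((1+b*(k^2-α^2))^2 + (2*b*k*α)^2) = 2*k*α*(a-b) := by
    linear_combination (2*b*k*α)*hre - (1+b*(k^2-α^2))*him
  obtain ⟨hu1, hu2⟩ := aux_bounds a b c α k x y _ ha hab hc hα hkey hαb haα hx0 rfl hP hQ
  rw [hQre]
  constructor <;> [linarith; linarith]
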